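/- Let N ≥ 1 be an integer, let X have the Gamma(N,1) distribution and let U be an independent exponential random variable with rate λ > 0. Then for every s > 0, Prob( X < (U+1)·s ) = 1 − λ·e^{−s} · Σ_{m=0}^{N−1} s^m · Σ_{n=0}^{m} (1/(m−n)!) · (λ + s)^{−(n+1)}. -/

import Mathlib

open scoped ENNReal NNReal
open MeasureTheory ProbabilityTheory Real Set

-- integrability of u^n e^{-cu} on Ioi 0
lemma aux_integrableOn_pow_mul_exp {c : ℝ} (hc : 0 < c) (n : ℕ) :
    IntegrableOn (fun u : ℝ => u ^ n * Real.exp (-(c * u))) (Ioi 0) := by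
  have h0 : IntegrableOn (fun x : ℝ => Real.exp (-x) * x ^ (((n : ℝ) + 1) - 1)) (Ioi 0) :=
    Real.GammaIntegral_convergent (by positivity)
  have h1 : IntegrableOn (fun u : ℝ => Real.exp (-(c * u)) * (c * u) ^ (((n : ℝ) + 1) - 1))
      (Ioi 0) := by
    have := (integrableOn_Ioi_comp_mul_left_iff
      (fun x : ℝ => Real.exp (-x) * x ^ (((n : ℝ) + 1) - 1)) 0 hc).mpr (by simpa using h0)
    simpa using this
  have h2 : IntegrableOn (fun u : ℝ => c ^ n * (u ^ n * Real.exp (-(c * u)))) (Ioi 0) := by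
    refine h1.congr_fun (fun u hu => ?_) measurableSet_Ioi
    have hu0 : (0 : ℝ) < u := hu
    beta_reduce
    rw [add_sub_cancel_right, Real.rpow_natCast, mul_pow]
    ring
  have := h2.const_mul ((c : ℝ) ^ n)⁻¹
  refine (integrable_const_mul_iff ?_ _).mp h2
  exact isUnit_iff_ne_zero.mpr (by positivity)

lemma aux_integral_pow_mul_exp {c : ℝ} (hc : 0 < c) (n : ℕ) :
    ∫ u in Ioi (0:ℝ), u ^ n * Real.exp (-(c * u)) = (n.factorial : ℝ) / c ^ (n + 1) := by
  have h := integral_rpow_mul_exp_neg_mul_Ioi (a := (n : ℝ) + 1) (r := c) (by positivity) hc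
  rw [show ((n : ℝ) + 1) - 1 = (n : ℝ) by ring] at h
  simp_rw [Real.rpow_natCast] at h
  rw [h, show ((n : ℝ) + 1) = ((n + 1 : ℕ) : ℝ) by push_cast; ring, Real.rpow_natCast]
  rw [show ((n + 1 : ℕ) : ℝ) = (n : ℝ) + 1 by push_cast; ring, Real.Gamma_nat_eq_factorial]
  rw [div_pow, one_pow]
  ring

lemma aux_binom_eq (m : ℕ) (u : ℝ) (c : ℝ) :
    (u + 1) ^ m * Real.exp (-(c * u)) =
      ∑ n ∈ Finset.range (m + 1), (m.choose n : ℝ) * (u ^ n * Real.exp (-(c * u))) := by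
  rw [add_pow, Finset.sum_mul]
  refine Finset.sum_congr rfl (fun n hn => ?_)
  simp [one_pow]
  ring

lemma aux_integrableOn_binom {c : ℝ} (hc : 0 < c) (m : ℕ) :
    IntegrableOn (fun u : ℝ => (u + 1) ^ m * Real.exp (-(c * u))) (Ioi 0) := by
  have : IntegrableOn (fun u : ℝ => ∑ n ∈ Finset.range (m + 1),
      (m.choose n : ℝ) * (u ^ n * Real.exp (-(c * u)))) (Ioi 0) := by
    apply MeasureTheory.integrable_finset_sum
    intro n _
    exact (aux_integrableOn_pow_mul_exp hc n).const_mul _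
  exact this.congr_fun (fun u _ => (aux_binom_eq m u c).symm) measurableSet_Ioi

lemma aux_integral_binom {c : ℝ} (hc : 0 < c) (m : ℕ) :
    ∫ u in Ioi (0:ℝ), (u + 1) ^ m * Real.exp (-(c * u)) =
      ∑ n ∈ Finset.range (m + 1), (m.choose n : ℝ) * ((n.factorial : ℝ) / c ^ (n + 1)) := by
  rw [setIntegral_congr_fun measurableSet_Ioi (fun u _ => aux_binom_eq m u c)]
  rw [integral_finset_sum _ (fun n _ => (aux_integrableOn_pow_mul_exp hc n).const_mul _)]
  exact Finset.sum_congr rfl fun n _ => by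
    rw [integral_const_mul, aux_integral_pow_mul_exp hc n]

lemma aux_hasDerivAt (N : ℕ) (hN : 1 ≤ N) (x : ℝ) :
    HasDerivAt (fun y : ℝ => -(Real.exp (-y) * ∑ m ∈ Finset.range N, y ^ m / m.factorial))
      (x ^ (N - 1) * Real.exp (-x) / (N - 1).factorial) x := by
  have hS : HasDerivAt (fun y : ℝ => ∑ m ∈ Finset.range N, y ^ m / m.factorial)
      (∑ m ∈ Finset.range N, ((m : ℝ) * x ^ (m - 1)) / m.factorial) x :=
    HasDerivAt.fun_sum (fun m _ => (hasDerivAt_pow m x).div_const _)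
  have hE : HasDerivAt (fun y : ℝ => Real.exp (-y)) (Real.exp (-x) * (-1)) x :=
    (hasDerivAt_neg x).exp
  have hprod := (hE.fun_mul hS).fun_neg
  refine hprod.congr_deriv ?_
  obtain ⟨K, rfl⟩ : ∃ K, N = K + 1 := ⟨N - 1, (Nat.succ_pred_eq_of_pos hN).symm⟩
  have h2 : (∑ m ∈ Finset.range (K + 1), ((m : ℝ) * x ^ (m - 1)) / m.factorial)
      = ∑ i ∈ Finset.range K, x ^ i / i.factorial := by
    rw [Finset.sum_range_succ']
    simp only [Nat.cast_zero, zero_mul, zero_div, add_zero]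
    refine Finset.sum_congr rfl (fun i _ => ?_)
    rw [Nat.add_sub_cancel, Nat.factorial_succ]
    push_cast
    exact mul_div_mul_left _ _ (by positivity)
  rw [h2, Finset.sum_range_succ, Nat.add_sub_cancel]
  ring

lemma aux_gamma_Iio (N : ℕ) (hN : 1 ≤ N) {t : ℝ} (ht : 0 ≤ t) :
    gammaMeasure N 1 (Iio t) =
      ENNReal.ofReal (1 - Real.exp (-t) * ∑ m ∈ Finset.range N, t ^ m / m.factorial) := by
  have hcast : ((N : ℝ)) - 1 = ((N - 1 : ℕ) : ℝ) := by
    rw [Nat.cast_sub hN]; norm_num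
  have hGamma : Real.Gamma (N : ℝ) = ((N - 1).factorial : ℝ) := by
    rw [show ((N : ℝ)) = ((N - 1 : ℕ) : ℝ) + 1 by rw [← hcast]; ring]
    exact Real.Gamma_nat_eq_factorial (N - 1)
  have hfcont : Continuous (fun x : ℝ => x ^ (N - 1) * Real.exp (-x) / (N - 1).factorial) := by
    fun_prop
  rw [gammaMeasure, withDensity_apply _ measurableSet_Iio, ← Iio_union_Ico_eq_Iio ht,
    lintegral_union measurableSet_Ico
      ((Set.Iio_disjoint_Ici le_rfl).mono_right Set.Ico_subset_Ici_self),
    lintegral_gammaPDF_of_nonpos le_rfl, zero_add]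
  have hcong : ∫⁻ x in Ico 0 t, gammaPDF N 1 x
      = ∫⁻ x in Ico 0 t, ENNReal.ofReal (x ^ (N - 1) * Real.exp (-x) / (N - 1).factorial) := by
    refine setLIntegral_congr_fun measurableSet_Ico (fun x hx => ?_)
    rw [gammaPDF_of_nonneg hx.1, one_rpow, one_mul, hGamma, hcast, Real.rpow_natCast]
    congr 1
    ring
  rw [hcong, ← MeasureTheory.ofReal_integral_eq_lintegral_ofReal
    ((hfcont.integrableOn_Icc).mono_set Ico_subset_Icc_self)
    ((ae_restrict_iff' measurableSet_Ico).mpr (ae_of_all _ (fun x hx => by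
      have h := hx.1; positivity)))]
  congr 1
  rw [MeasureTheory.integral_Ico_eq_integral_Ioo, ← MeasureTheory.integral_Ioc_eq_integral_Ioo,
    ← intervalIntegral.integral_of_le ht]
  rw [intervalIntegral.integral_eq_sub_of_hasDerivAt
    (fun x _ => aux_hasDerivAt N hN x) (hfcont.intervalIntegrable 0 t)]
  have hS0 : (∑ m ∈ Finset.range N, (0:ℝ) ^ m / m.factorial) = 1 := by
    obtain ⟨K, rfl⟩ : ∃ K, N = K + 1 := ⟨N - 1, (Nat.succ_pred_eq_of_pos hN).symm⟩
    rw [Finset.sum_range_succ']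
    simp
  rw [hS0]
  simp [Real.exp_zero]
  ring

/-- The exact c.d.f. of the first-hop SINR of the MRC/MRT scheme (eq. (62) in the proof of
Theorem 4): if `X ~ Gamma(N,1)` and `U ~ Exp(λ)` are independent, then for every `s > 0`,
`Prob(X < (U+1)s) = 1 − λ e^{−s} Σ_{m=0}^{N−1} s^m Σ_{n=0}^m (1/(m−n)!) (λ+s)^{−(n+1)}`. -/
theorem cdf_first_hop_sinr_mrc
    {Ω : Type*} [MeasureSpace Ω] [IsProbabilityMeasure (ℙ : Measure Ω)]
    (N : ℕ) (hN : 1 ≤ N) (lam : ℝ) (hlam : 0 < lam) (X U : Ω → ℝ)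
    (hXU : IndepFun X U ℙ)
    (hX : Measure.map X ℙ = gammaMeasure N 1)
    (hU : Measure.map U ℙ = expMeasure lam)
    (s : ℝ) (hs : 0 < s) :
    (ℙ {ω | X ω < (U ω + 1) * s}).toReal =
      1 - lam * Real.exp (-s) *
        ∑ m ∈ Finset.range N, s ^ m *
          ∑ n ∈ Finset.range (m + 1),
            (1 / (Nat.factorial (m - n) : ℝ)) * ((lam + s) ^ (n + 1))⁻¹ := by
  have hNpos : (0:ℝ) < (N : ℝ) := by exact_mod_cast Nat.lt_of_lt_of_le Nat.zero_lt_one hN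
  have instG : IsProbabilityMeasure (gammaMeasure N 1) := isProbabilityMeasure_gammaMeasure hNpos one_pos
  have instE : IsProbabilityMeasure (expMeasure lam) := isProbabilityMeasure_expMeasure hlam
  have hXm : AEMeasurable X ℙ := by
    by_contra h
    have h1 := instG.measure_univ
    rw [← hX, Measure.map_of_not_aemeasurable h] at h1
    simp at h1
  have hUm : AEMeasurable U ℙ := by
    by_contra h
    have h1 := instE.measure_univ
    rw [← hU, Measure.map_of_not_aemeasurable h] at h1
    simp at h1
  have hmap : Measure.map (fun ω => (X ω, U ω)) ℙ = (gammaMeasure N 1).prod (expMeasure lam) := by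
    rw [← hX, ← hU]
    exact (indepFun_iff_map_prod_eq_prod_map_map hXm hUm).mp hXU
  have hSmeas : MeasurableSet {p : ℝ × ℝ | p.1 < (p.2 + 1) * s} :=
    measurableSet_lt measurable_fst ((measurable_snd.add_const 1).mul_const s)
  -- abbreviations
  set G : ℝ → ℝ := fun t => 1 - Real.exp (-t) * ∑ m ∈ Finset.range N, t ^ m / m.factorial
    with hG
  have hGnonneg : ∀ t : ℝ, 0 ≤ t → 0 ≤ G t := by
    intro t ht
    have h1 : (∑ m ∈ Finset.range N, t ^ m / m.factorial) ≤ Real.exp t :=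
      Real.sum_le_exp_of_nonneg ht N
    have h2 : Real.exp (-t) * (∑ m ∈ Finset.range N, t ^ m / m.factorial)
        ≤ Real.exp (-t) * Real.exp t := by
      exact mul_le_mul_of_nonneg_left h1 (Real.exp_nonneg _)
    rw [← Real.exp_add, neg_add_cancel, Real.exp_zero] at h2
    simp only [hG]
    linarith
  -- step 1: probability as product measure
  have h1 : ℙ {ω | X ω < (U ω + 1) * s}
      = ((gammaMeasure N 1).prod (expMeasure lam)) {p : ℝ × ℝ | p.1 < (p.2 + 1) * s} := by
    rw [← hmap, Measure.map_apply_of_aemeasurable (hXm.prodMk hUm) hSmeas]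
    rfl
  -- step 2: Fubini slice
  have h2 : ((gammaMeasure N 1).prod (expMeasure lam)) {p : ℝ × ℝ | p.1 < (p.2 + 1) * s}
      = ∫⁻ u, gammaMeasure N 1 (Iio ((u + 1) * s)) ∂(expMeasure lam) := by
    rw [Measure.prod_apply_symm hSmeas]
    rfl
  -- step 3: density of the exponential measure
  have hmono : Measurable fun u : ℝ => gammaMeasure N 1 (Iio ((u + 1) * s)) := by
    apply Monotone.measurable
    intro a b hab
    exact measure_mono (Iio_subset_Iio (by nlinarith))
  have h3 : ∫⁻ u, gammaMeasure N 1 (Iio ((u + 1) * s)) ∂(expMeasure lam)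
      = ∫⁻ u in Ici 0, ENNReal.ofReal (lam * Real.exp (-(lam * u)) * G ((u + 1) * s)) := by
    have hpdfmeas : Measurable (gammaPDF 1 lam) :=
      (measurable_gammaPDFReal 1 lam).ennreal_ofReal
    rw [show expMeasure lam = volume.withDensity (gammaPDF 1 lam) from rfl,
      lintegral_withDensity_eq_lintegral_mul _ hpdfmeas hmono,
      ← lintegral_add_compl (μ := volume)
        (fun u => (gammaPDF 1 lam * fun u => gammaMeasure N 1 (Iio ((u + 1) * s))) u)
        measurableSet_Ici, compl_Ici]
    have hright : ∫⁻ u in Iio (0:ℝ),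
        (gammaPDF 1 lam * fun u => gammaMeasure N 1 (Iio ((u + 1) * s))) u = 0 := by
      rw [setLIntegral_congr_fun (g := fun _ => (0 : ℝ≥0∞)) measurableSet_Iio
        (fun u (hu : u < 0) => by
          simp [Pi.mul_apply, gammaPDF_of_neg hu])]
      simp
    rw [hright, add_zero]
    refine setLIntegral_congr_fun measurableSet_Ici (fun u hu => ?_)
    have hu : (0:ℝ) ≤ u := hu
    have hst : (0:ℝ) ≤ (u + 1) * s := by positivity
    rw [Pi.mul_apply, show gammaPDF 1 lam u = exponentialPDF lam u from rfl,
      exponentialPDF_of_nonneg hu, aux_gamma_Iio N hN hst,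
      ← ENNReal.ofReal_mul (by positivity)]
  -- step 4: to a Bochner integral
  have hgcont : Continuous fun u : ℝ => lam * Real.exp (-(lam * u)) * G ((u + 1) * s) := by
    simp only [hG]
    fun_prop
  have h4 : (∫⁻ u in Ici (0:ℝ),
        ENNReal.ofReal (lam * Real.exp (-(lam * u)) * G ((u + 1) * s))).toReal
      = ∫ u in Ici (0:ℝ), lam * Real.exp (-(lam * u)) * G ((u + 1) * s) := by
    rw [← MeasureTheory.integral_eq_lintegral_of_nonneg_ae]
    · exact (ae_restrict_iff' measurableSet_Ici).mpr (ae_of_all _ (fun u hu => by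
        have h := hGnonneg ((u + 1) * s) (by have : (0:ℝ) ≤ u := hu; positivity)
        have : (0:ℝ) ≤ lam * Real.exp (-(lam * u)) := by positivity
        exact mul_nonneg this h))
    · exact hgcont.aestronglyMeasurable.restrict
  -- step 5: compute the real integral
  have hc : (0:ℝ) < lam + s := by linarith
  have hptwise : ∀ u : ℝ, lam * Real.exp (-(lam * u)) * G ((u + 1) * s)
      = lam * Real.exp (-(lam * u)) -
        ∑ m ∈ Finset.range N, (lam * Real.exp (-s) * s ^ m / m.factorial) *
          ((u + 1) ^ m * Real.exp (-((lam + s) * u))) := by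
    intro u
    simp only [hG]
    rw [mul_sub, mul_one, Finset.mul_sum, Finset.mul_sum]
    congr 1
    refine Finset.sum_congr rfl (fun m _ => ?_)
    rw [mul_pow]
    have he : Real.exp (-(lam * u)) * Real.exp (-((u + 1) * s))
        = Real.exp (-s) * Real.exp (-((lam + s) * u)) := by
      rw [← Real.exp_add, ← Real.exp_add]
      congr 1
      ring
    calc lam * Real.exp (-(lam * u)) * (Real.exp (-((u + 1) * s)) *
            ((u + 1) ^ m * s ^ m / m.factorial))
        = (lam * s ^ m / m.factorial) * ((u + 1) ^ m) *
            (Real.exp (-(lam * u)) * Real.exp (-((u + 1) * s))) := by ring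
      _ = (lam * s ^ m / m.factorial) * ((u + 1) ^ m) *
            (Real.exp (-s) * Real.exp (-((lam + s) * u))) := by rw [he]
      _ = lam * Real.exp (-s) * s ^ m / m.factorial *
            ((u + 1) ^ m * Real.exp (-((lam + s) * u))) := by ring
  have hA : IntegrableOn (fun u : ℝ => lam * Real.exp (-(lam * u))) (Ioi 0) := by
    have h0 : IntegrableOn (fun u : ℝ => lam * (u ^ 0 * Real.exp (-(lam * u)))) (Ioi 0) :=
      (aux_integrableOn_pow_mul_exp hlam 0).const_mul lam
    exact h0.congr_fun (fun u _ => by simp) measurableSet_Ioi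
  have hB : IntegrableOn (fun u : ℝ => ∑ m ∈ Finset.range N,
      (lam * Real.exp (-s) * s ^ m / m.factorial) *
        ((u + 1) ^ m * Real.exp (-((lam + s) * u)))) (Ioi 0) :=
    MeasureTheory.integrable_finset_sum _
      (fun m _ => (aux_integrableOn_binom hc m).const_mul _)
  have hintA : ∫ u in Ioi (0:ℝ), lam * Real.exp (-(lam * u)) = 1 := by
    have h0 := aux_integral_pow_mul_exp hlam 0
    simp only [pow_zero, one_mul, pow_one, Nat.factorial_zero, Nat.cast_one] at h0
    rw [MeasureTheory.integral_const_mul, h0]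
    field_simp
    ring
  have key : ∫ u in Ioi (0:ℝ), lam * Real.exp (-(lam * u)) * G ((u + 1) * s)
      = 1 - lam * Real.exp (-s) *
        ∑ m ∈ Finset.range N, s ^ m *
          ∑ n ∈ Finset.range (m + 1),
            (1 / (Nat.factorial (m - n) : ℝ)) * ((lam + s) ^ (n + 1))⁻¹ := by
    rw [setIntegral_congr_fun measurableSet_Ioi (fun u _ => hptwise u),
      integral_sub hA hB, hintA,
      MeasureTheory.integral_finset_sum _
        (fun m _ => (aux_integrableOn_binom hc m).const_mul _)]
    congr 1
    rw [Finset.mul_sum]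
    refine Finset.sum_congr rfl (fun m _ => ?_)
    rw [MeasureTheory.integral_const_mul, aux_integral_binom hc m, Finset.mul_sum,
      Finset.mul_sum, Finset.mul_sum]
    refine Finset.sum_congr rfl (fun n hn => ?_)
    have hnm : n ≤ m := Nat.lt_succ_iff.mp (Finset.mem_range.mp hn)
    have hfid : (m.choose n : ℝ) * n.factorial * (m - n).factorial = m.factorial := by
      exact_mod_cast congrArg (Nat.cast : ℕ → ℝ)
        (Nat.choose_mul_factorial_mul_factorial hnm)
    have hm0 : (m.factorial : ℝ) ≠ 0 := by positivity
    have hmn0 : ((m - n).factorial : ℝ) ≠ 0 := by positivity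
    have hls0 : ((lam + s) : ℝ) ^ (n + 1) ≠ 0 := by positivity
    field_simp
    linear_combination hfid
  -- assemble
  rw [h1, h2, h3, h4, MeasureTheory.integral_Ici_eq_integral_Ioi, key]
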